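/- Let R be a UFD and I an ideal with R/I ≅ ℤ[x]/(2, x²+1). Then every τ_I-atomic element of R has τ_I-elasticity 1. -/

import Mathlib

open Polynomial
open scoped ENNReal

variable {R : Type*} [CommRing R]

/-- `a = λ b₁ ⋯ b_k` with `λ` a unit, `k ≥ 1`, and all `bᵢ` pairwise congruent mod `I`. -/
def IsTauFactorization (I : Ideal R) (a : R) (L : List R) : Prop :=
  L ≠ [] ∧ (∃ u : R, IsUnit u ∧ a = u * L.prod) ∧
    ∀ b ∈ L, ∀ c ∈ L, Ideal.Quotient.mk I b = Ideal.Quotient.mk I c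

/-- A `τ_I`-atom: a nonzero nonunit whose only `τ_I`-factorizations have length one. -/
def IsTauAtom (I : Ideal R) (a : R) : Prop :=
  a ≠ 0 ∧ ¬ IsUnit a ∧ ∀ L : List R, IsTauFactorization I a L → L.length = 1

/-- A `τ_I`-factorization into `τ_I`-atoms. -/
def IsTauAtomicFactorization (I : Ideal R) (a : R) (L : List R) : Prop :=
  IsTauFactorization I a L ∧ ∀ b ∈ L, IsTauAtom I b

/-- An element is `τ_I`-atomic if it has a `τ_I`-factorization into `τ_I`-atoms. -/
def IsTauAtomic (I : Ideal R) (a : R) : Prop :=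
  ∃ L : List R, IsTauAtomicFactorization I a L

/-- The `τ_I`-elasticity of an element: `sup{k/l}` over pairs of atomic `τ_I`-factorizations. -/
noncomputable def tauElasticity (I : Ideal R) (a : R) : ℝ≥0∞ :=
  sSup {r : ℝ≥0∞ | ∃ L₁ L₂ : List R, IsTauAtomicFactorization I a L₁ ∧
    IsTauAtomicFactorization I a L₂ ∧
    r = (L₁.length : ℝ≥0∞) / (L₂.length : ℝ≥0∞)}

/-- The `τ_I`-elasticity of the ring: the supremum over `τ_I`-atomic elements. -/
noncomputable def tauRingElasticity (I : Ideal R) : ℝ≥0∞ :=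
  ⨆ a ∈ {a : R | IsTauAtomic I a}, tauElasticity I a

set_option linter.unusedSectionVars false

section TauAux

open DualNumber

abbrev DD := DualNumber (ZMod 2)
instance : DecidableEq DD := inferInstanceAs (DecidableEq (ZMod 2 × ZMod 2))
instance : Fintype DD := inferInstanceAs (Fintype (ZMod 2 × ZMod 2))

noncomputable def phi : ℤ[X] →+* DD := eval₂RingHom (Int.castRingHom DD) (1 + ε)

lemma phi_X2 : phi (X ^ 2 + 1) = 0 := by
  simp only [phi, map_add, map_pow, map_one, coe_eval₂RingHom, eval₂_X]
  decide

lemma phi_span : ∀ p ∈ Ideal.span ({2, X ^ 2 + 1} : Set ℤ[X]), phi p = 0 := by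
  intro p hp
  rw [Ideal.mem_span_pair] at hp
  obtain ⟨u, v, rfl⟩ := hp
  rw [map_add, map_mul, map_mul, phi_X2, map_ofNat]
  have : (2 : DD) = 0 := by decide
  rw [this]
  ring

noncomputable def psi : (ℤ[X] ⧸ Ideal.span ({2, X ^ 2 + 1} : Set ℤ[X])) →+* DD :=
  Ideal.Quotient.lift _ phi phi_span

set_option synthInstance.maxHeartbeats 1000000 in
lemma psi_inj : Function.Injective psi := by
  rw [injective_iff_map_eq_zero]
  intro q hq
  obtain ⟨p, rfl⟩ := Ideal.Quotient.mk_surjective q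
  rw [psi, Ideal.Quotient.lift_mk] at hq
  rw [Ideal.Quotient.eq_zero_iff_mem]
  have hmonic : (X ^ 2 + 1 : ℤ[X]).Monic := by
    have := Polynomial.monic_X_pow_add_C (R := ℤ) (1 : ℤ) (two_ne_zero)
    simpa using this
  set r := p %ₘ (X ^ 2 + 1) with hr
  have hq2 : ((X : ℤ[X]) ^ 2 + 1).degree = 2 := by
    simpa using Polynomial.degree_X_pow_add_C (n := 2) (by norm_num) (1 : ℤ)
  have hdeg : r.degree < 2 := by
    have := Polynomial.degree_modByMonic_lt p hmonic
    rwa [hq2] at this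
  have hdeg1 : r.degree ≤ 1 := by
    revert hdeg
    cases hd : r.degree with
    | bot => intro _; exact bot_le
    | coe n =>
      intro h
      have e2 : ((2 : ℕ) : WithBot ℕ) = (2 : WithBot ℕ) := by norm_cast
      have e1 : ((1 : ℕ) : WithBot ℕ) = (1 : WithBot ℕ) := by norm_cast
      rw [← e2] at h
      have hn : n < 2 := WithBot.coe_lt_coe.mp h
      rw [← e1]
      exact WithBot.coe_le_coe.mpr (by omega)
  have hrX : r = C (r.coeff 1) * X + C (r.coeff 0) :=
    Polynomial.eq_X_add_C_of_degree_le_one hdeg1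
  have hp : p = r + (X ^ 2 + 1) * (p /ₘ (X ^ 2 + 1)) := by
    conv_lhs => rw [← Polynomial.modByMonic_add_div p (X ^ 2 + 1)]
  set a := r.coeff 1
  set b := r.coeff 0
  have hphir : phi r = 0 := by
    rw [hp, map_add, map_mul, phi_X2] at hq
    simpa using hq
  have hab : phi r = (a : DD) * (1 + ε) + (b : DD) := by
    rw [hrX, map_add, map_mul]
    have h1 : phi (C a) = (a : DD) := by simp [phi]
    have h2 : phi (C b) = (b : DD) := by simp [phi]
    have h3 : phi X = 1 + ε := by simp [phi]
    rw [h1, h2, h3]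
  rw [hab] at hphir
  have h2 : (2 : DD) = 0 := by decide
  have castred : ∀ n : ℤ, (n : DD) = ((n % 2 : ℤ) : DD) := by
    intro n
    conv_lhs => rw [← Int.mul_ediv_add_emod n 2]
    push_cast
    rw [h2]
    ring
  have ha2 : a % 2 = 0 ∧ b % 2 = 0 := by
    rw [castred a, castred b] at hphir
    rcases Int.emod_two_eq_zero_or_one a with h | h <;>
      rcases Int.emod_two_eq_zero_or_one b with h' | h' <;>
      rw [h, h'] at hphir <;>
      first
        | exact ⟨h, h'⟩
        | (exfalso; revert hphir; push_cast; decide)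
  obtain ⟨a', ha'⟩ := Int.dvd_of_emod_eq_zero ha2.1
  obtain ⟨b', hb'⟩ := Int.dvd_of_emod_eq_zero ha2.2
  rw [Ideal.mem_span_pair]
  refine ⟨C a' * X + C b', p /ₘ (X ^ 2 + 1), ?_⟩
  have hC2 : (C (2 : ℤ) : ℤ[X]) = 2 := by norm_num
  have hr2 : r = (C a' * X + C b') * 2 := by
    rw [hrX, ha', hb', Polynomial.C_mul, Polynomial.C_mul, hC2]
    ring
  conv_rhs => rw [hp, hr2]
  ring

lemma DD.cases : ∀ q : DD, q = 0 ∨ q = 1 ∨ q = ε ∨ q = 1 + ε := by decide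
lemma DD.unit_cases : ∀ q r : DD, q * r = 1 → q = 1 ∨ q = 1 + ε := by decide

section Main
variable {R : Type*} [CommRing R] [IsDomain R] [UniqueFactorizationMonoid R]
  (I : Ideal R) (π : R →+* DD)

/-- number of elements of `s` whose residue is `c` -/
noncomputable def cnt (c : DD) (s : Multiset R) : ℕ :=
  Multiset.card (s.filter (fun p => π p = c))

variable {I π}

lemma cnt_zero (c : DD) : cnt π c 0 = 0 := by simp [cnt]

lemma cnt_cons (c : DD) (p : R) (s : Multiset R) :
    cnt π c (p ::ₘ s) = (if π p = c then 1 else 0) + cnt π c s := by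
  classical
  simp [cnt, Multiset.filter_cons]
  split <;> simp

lemma cnt_add (c : DD) (s t : Multiset R) :
    cnt π c (s + t) = cnt π c s + cnt π c t := by
  simp [cnt, Multiset.filter_add]

lemma cnt_pos_iff (c : DD) (s : Multiset R) : 1 ≤ cnt π c s ↔ ∃ p ∈ s, π p = c := by
  classical
  unfold cnt
  constructor
  · intro h
    have hne : s.filter (fun p => π p = c) ≠ 0 := by
      intro h0
      rw [h0] at h
      simp at h
    obtain ⟨p, hp⟩ := Multiset.exists_mem_of_ne_zero hne
    rw [Multiset.mem_filter] at hp
    exact ⟨p, hp.1, hp.2⟩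
  · rintro ⟨p, hp1, hp2⟩
    have : p ∈ s.filter (fun p => π p = c) := Multiset.mem_filter.mpr ⟨hp1, hp2⟩
    have := Multiset.card_pos_iff_exists_mem.mpr ⟨p, this⟩
    omega

lemma cnt_eq_zero_iff (c : DD) (s : Multiset R) : cnt π c s = 0 ↔ ∀ p ∈ s, π p ≠ c := by
  classical
  constructor
  · intro h p hp hc
    have : 1 ≤ cnt π c s := (cnt_pos_iff c s).mpr ⟨p, hp, hc⟩
    omega
  · intro h
    by_contra hne
    have : 1 ≤ cnt π c s := by omega
    obtain ⟨p, hp, hc⟩ := (cnt_pos_iff c s).mp this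
    exact h p hp hc

/-- master classification of products of residues -/
lemma masterR (s : Multiset R) :
    (π s.prod = 0 ∧ (1 ≤ cnt π 0 s ∨ 2 ≤ cnt π ε s)) ∨
    (π s.prod = ε ∧ cnt π 0 s = 0 ∧ cnt π ε s = 1) ∨
    ((π s.prod = 1 ∨ π s.prod = 1 + ε) ∧ cnt π 0 s = 0 ∧ cnt π ε s = 0) := by
  induction s using Multiset.induction_on with
  | empty =>
    refine Or.inr (Or.inr ⟨Or.inl ?_, cnt_zero 0, cnt_zero ε⟩)
    simp
  | cons p s ih =>
    have h0 := cnt_cons (π := π) 0 p s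
    have hε := cnt_cons (π := π) ε p s
    have hprod : π (p ::ₘ s).prod = π p * π s.prod := by
      rw [Multiset.prod_cons, map_mul]
    rcases ih with ⟨h1, h2⟩ | ⟨h1, h2, h3⟩ | ⟨h1, h2, h3⟩ <;>
      [skip; skip; rcases h1 with h1 | h1] <;>
      rcases DD.cases (π p) with ha | ha | ha | ha <;>
      rw [ha] at h0 hε <;>
      rw [ha, h1] at hprod <;>
      (first | rw [if_pos (by decide)] at h0 | rw [if_neg (by decide)] at h0) <;>
      (first | rw [if_pos (by decide)] at hε | rw [if_neg (by decide)] at hε) <;>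
      first
      | (refine Or.inl ⟨by rw [hprod]; decide, by omega⟩)
      | (refine Or.inr (Or.inl ⟨by rw [hprod]; decide, by omega, by omega⟩))
      | (refine Or.inr (Or.inr ⟨Or.inl (by rw [hprod]; decide), by omega, by omega⟩))
      | (refine Or.inr (Or.inr ⟨Or.inr (by rw [hprod]; decide), by omega, by omega⟩))

lemma exists_primes (b : R) (hb : b ≠ 0) :
    ∃ (u : Rˣ) (s : Multiset R), (∀ p ∈ s, Prime p) ∧ b = ↑u * s.prod := by
  obtain ⟨u, hu⟩ := UniqueFactorizationMonoid.factors_prod hb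
  exact ⟨u, _, fun p hp => UniqueFactorizationMonoid.prime_of_factor p hp,
    by rw [← hu]; ring⟩

lemma unit_res (u : Rˣ) : π ↑u = 1 ∨ π ↑u = 1 + ε :=
  DD.unit_cases _ (π ↑u⁻¹) (by rw [← map_mul, Units.mul_inv, map_one])

lemma prod_res_one (s : Multiset R) (h : ∀ x ∈ s, π x = 1) : π s.prod = 1 := by
  rw [map_multiset_prod]
  exact Multiset.prod_eq_one (by
    intro x hx
    obtain ⟨p, hp, rfl⟩ := Multiset.mem_map.mp hx
    exact h p hp)

variable (hπ : ∀ b c : R, Ideal.Quotient.mk I b = Ideal.Quotient.mk I c ↔ π b = π c)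
include hπ

lemma not_atom_split (b x y : R) (u : Rˣ) (hb : b = ↑u * (x * y)) (hxy : π x = π y)
    (hatom : IsTauAtom I b) : False := by
  have hfac : IsTauFactorization I b [x, y] := by
    refine ⟨by simp, ⟨↑u, u.isUnit, by rw [show ([x, y] : List R).prod = x * y by simp]; exact hb⟩, ?_⟩
    intro p hp q hq
    simp only [List.mem_cons, List.not_mem_nil, or_false] at hp hq
    rcases hp with rfl | rfl <;> rcases hq with rfl | rfl
    · rfl
    · exact (hπ _ _).mpr hxy
    · exact (hπ _ _).mpr hxy.symm
    · rfl
  have := hatom.2.2 _ hfac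
  simp at this

lemma not_atom_multiblock (b : R) (u : Rˣ) (s : Multiset R) (c : DD) (hb : b = ↑u * s.prod)
    (h2 : 2 ≤ cnt π c s)
    (hr : c * π (s.filter (fun p => ¬ π p = c)).prod = c)
    (hatom : IsTauAtom I b) : False := by
  classical
  set sc := s.filter (fun p => π p = c) with hsc
  set sr := s.filter (fun p => ¬ π p = c) with hsr
  have hsplit : sc + sr = s := Multiset.filter_add_not _ s
  have hcard : 2 ≤ Multiset.card sc := h2
  have hne : sc ≠ 0 := by
    intro h
    rw [h] at hcard
    simp at hcard
  obtain ⟨p, hp⟩ := Multiset.exists_mem_of_ne_zero hne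
  set L : List R := (p * sr.prod) :: (sc.erase p).toList with hL
  have hres : ∀ x ∈ L, π x = c := by
    intro x hx
    rw [hL, List.mem_cons] at hx
    rcases hx with rfl | hx
    · have hpc : π p = c := (Multiset.mem_filter.mp hp).2
      rw [map_mul, hpc, hr]
    · have : x ∈ sc.erase p := by rwa [Multiset.mem_toList] at hx
      exact (Multiset.mem_filter.mp (Multiset.mem_of_mem_erase this)).2
  have hprodL : L.prod = s.prod := by
    rw [hL, List.prod_cons, Multiset.prod_toList]
    have h1 : p * (sc.erase p).prod = sc.prod := by
      rw [← Multiset.prod_cons, Multiset.cons_erase hp]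
    calc p * sr.prod * (sc.erase p).prod = p * (sc.erase p).prod * sr.prod := by ring
      _ = sc.prod * sr.prod := by rw [h1]
      _ = (sc + sr).prod := (Multiset.prod_add _ _).symm
      _ = s.prod := by rw [hsplit]
  have hfac : IsTauFactorization I b L := by
    refine ⟨by simp [hL], ⟨↑u, u.isUnit, by rw [hprodL]; exact hb⟩, ?_⟩
    intro x hx y hy
    exact (hπ _ _).mpr (by rw [hres x hx, hres y hy])
  have hlen := hatom.2.2 _ hfac
  rw [hL] at hlen
  simp only [List.length_cons, Multiset.length_toList] at hlen
  have hce : Multiset.card (sc.erase p) = Multiset.card sc - 1 := by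
    rw [Multiset.card_erase_of_mem hp, Nat.pred_eq_sub_one]
  omega

lemma atom_zero (b : R) (hatom : IsTauAtom I b) (hπb : π b = 0) :
    ∃ (u : Rˣ) (s : Multiset R), (∀ p ∈ s, Prime p) ∧ b = ↑u * s.prod ∧ cnt π 0 s = 1 := by
  classical
  obtain ⟨u, s, hs, hb⟩ := exists_primes b hatom.1
  have hbu : π b = π ↑u * π s.prod := by rw [hb, map_mul]
  rcases masterR (π := π) s with ⟨h1, hc⟩ | ⟨h1, _, _⟩ | ⟨h1, _, _⟩
  · by_cases hz : 1 ≤ cnt π 0 s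
    · rcases Nat.lt_or_ge (cnt π 0 s) 2 with hlt | hge
      · exact ⟨u, s, hs, hb, by omega⟩
      · exfalso
        obtain ⟨p, hps, hp0⟩ := (cnt_pos_iff (π := π) 0 s).mp (by omega)
        obtain ⟨s', rfl⟩ := Multiset.exists_cons_of_mem hps
        have hcnt' : 1 ≤ cnt π 0 s' := by
          have := cnt_cons (π := π) 0 p s'
          rw [if_pos hp0] at this
          omega
        obtain ⟨q, hqs, hq0⟩ := (cnt_pos_iff (π := π) 0 s').mp hcnt'
        have hq : π s'.prod = 0 := by
          obtain ⟨s'', rfl⟩ := Multiset.exists_cons_of_mem hqs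
          rw [Multiset.prod_cons, map_mul, hq0, zero_mul]
        exact not_atom_split hπ b p s'.prod u
          (by rw [hb, Multiset.prod_cons]) (by rw [hp0, hq]) hatom
    · exfalso
      have h0 : cnt π 0 s = 0 := by omega
      have hε2 : 2 ≤ cnt π ε s := by
        rcases hc with h | h
        · omega
        · exact h
      refine not_atom_multiblock hπ b u s ε hb hε2 ?_ hatom
      set sr := s.filter (fun p => ¬ π p = ε) with hsr
      have hr0 : cnt π 0 sr = 0 := by
        rw [cnt_eq_zero_iff]
        intro p hp
        exact (cnt_eq_zero_iff (π := π) 0 s).mp h0 p (Multiset.mem_of_mem_filter hp)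
      have hrε : cnt π ε sr = 0 := by
        rw [cnt_eq_zero_iff]
        intro p hp
        exact (Multiset.mem_filter.mp hp).2
      rcases masterR (π := π) sr with ⟨_, hc'⟩ | ⟨_, _, h3⟩ | ⟨h1', _, _⟩
      · omega
      · omega
      · rcases h1' with h | h <;> rw [h] <;> decide
  · exfalso
    rw [hπb, h1] at hbu
    rcases unit_res (π := π) u with h | h <;> rw [h] at hbu <;> revert hbu <;> decide
  · exfalso
    rcases h1 with h1 | h1 <;> rw [hπb, h1] at hbu <;>
      rcases unit_res (π := π) u with h | h <;> rw [h] at hbu <;> revert hbu <;> decide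

lemma atom_eps (b : R) (hb0 : b ≠ 0) (hπb : π b = ε) :
    ∃ (u : Rˣ) (s : Multiset R), (∀ p ∈ s, Prime p) ∧ b = ↑u * s.prod ∧
      cnt π 0 s = 0 ∧ cnt π ε s = 1 := by
  obtain ⟨u, s, hs, hb⟩ := exists_primes b hb0
  have hbu : π b = π ↑u * π s.prod := by rw [hb, map_mul]
  rcases masterR (π := π) s with ⟨h1, _⟩ | ⟨h1, h2, h3⟩ | ⟨h1, _, _⟩
  · exfalso
    rw [hπb, h1] at hbu
    rcases unit_res (π := π) u with h | h <;> rw [h] at hbu <;> revert hbu <;> decide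
  · exact ⟨u, s, hs, hb, h2, h3⟩
  · exfalso
    rcases h1 with h1 | h1 <;> rw [hπb, h1] at hbu <;>
      rcases unit_res (π := π) u with h | h <;> rw [h] at hbu <;> revert hbu <;> decide

lemma atom_not_one (b : R) (hatom : IsTauAtom I b) (hπb : π b = 1) : False := by
  have hfac : IsTauFactorization I b [b, 1] := by
    refine ⟨by simp, ⟨1, isUnit_one, by simp⟩, ?_⟩
    intro p hp q hq
    simp only [List.mem_cons, List.not_mem_nil, or_false] at hp hq
    have h1 : π b = π 1 := by rw [hπb, map_one]
    rcases hp with rfl | rfl <;> rcases hq with rfl | rfl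
    · rfl
    · exact (hπ _ _).mpr h1
    · exact (hπ _ _).mpr h1.symm
    · rfl
  have := hatom.2.2 _ hfac
  simp at this

lemma atom_not_u (b : R) (hatom : IsTauAtom I b) (hπb : π b = 1 + ε)
    (v : Rˣ) (hv : π ↑v = 1 + ε) : False := by
  have hfac : IsTauFactorization I b [b, ↑v] := by
    refine ⟨by simp, ⟨↑v⁻¹, (v⁻¹).isUnit, ?_⟩, ?_⟩
    · rw [List.prod_cons, List.prod_cons, List.prod_nil, mul_one, mul_comm b,
        ← mul_assoc, Units.inv_mul, one_mul]
    · intro p hp q hq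
      simp only [List.mem_cons, List.not_mem_nil, or_false] at hp hq
      have h1 : π b = π ↑v := by rw [hπb, hv]
      rcases hp with rfl | rfl <;> rcases hq with rfl | rfl
      · rfl
      · exact (hπ _ _).mpr h1
      · exact (hπ _ _).mpr h1.symm
      · rfl
  have := hatom.2.2 _ hfac
  simp at this

lemma atom_u (b : R) (hatom : IsTauAtom I b) (hπb : π b = 1 + ε)
    (hnU : ∀ v : Rˣ, π ↑v = 1) :
    ∃ (u : Rˣ) (s : Multiset R), (∀ p ∈ s, Prime p) ∧ b = ↑u * s.prod ∧
      cnt π 0 s = 0 ∧ cnt π ε s = 0 ∧ cnt π (1 + ε) s = 1 := by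
  classical
  obtain ⟨u, s, hs, hb⟩ := exists_primes b hatom.1
  have hbs : π b = π s.prod := by rw [hb, map_mul, hnU u, one_mul]
  rcases masterR (π := π) s with ⟨h1, _⟩ | ⟨h1, _, _⟩ | ⟨h1, h2, h3⟩
  · rw [hπb, h1] at hbs; exact absurd hbs (by decide)
  · rw [hπb, h1] at hbs; exact absurd hbs (by decide)
  · have hall : ∀ p ∈ s, π p = 1 ∨ π p = 1 + ε := by
      intro p hp
      rcases DD.cases (π p) with h | h | h | h
      · exact absurd h ((cnt_eq_zero_iff (π := π) 0 s).mp h2 p hp)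
      · exact Or.inl h
      · exact absurd h ((cnt_eq_zero_iff (π := π) ε s).mp h3 p hp)
      · exact Or.inr h
    rcases Nat.lt_or_ge (cnt π (1 + ε) s) 2 with hlt | hge
    · rcases Nat.eq_zero_or_pos (cnt π (1 + ε) s) with h0 | hpos
      · exfalso
        have : π s.prod = 1 := prod_res_one s (by
          intro p hp
          rcases hall p hp with h | h
          · exact h
          · exact absurd h ((cnt_eq_zero_iff (π := π) (1 + ε) s).mp h0 p hp))
        rw [hπb, this] at hbs
        exact absurd hbs (by decide)
      · exact ⟨u, s, hs, hb, h2, h3, by omega⟩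
    · exfalso
      refine not_atom_multiblock hπ b u s (1 + ε) hb hge ?_ hatom
      have : π (s.filter (fun p => ¬ π p = 1 + ε)).prod = 1 := by
        apply prod_res_one
        intro p hp
        rcases hall p (Multiset.mem_of_mem_filter hp) with h | h
        · exact h
        · exact absurd h (Multiset.mem_filter.mp hp).2
      rw [this, mul_one]

omit hπ in
lemma gather (c : DD) (Z : List DD) (L : List R)
    (h : ∀ b ∈ L, ∃ (u : Rˣ) (s : Multiset R), (∀ p ∈ s, Prime p) ∧ b = ↑u * s.prod ∧
      cnt π c s = 1 ∧ ∀ z ∈ Z, cnt π z s = 0) :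
    ∃ (u : Rˣ) (s : Multiset R), (∀ p ∈ s, Prime p) ∧ L.prod = ↑u * s.prod ∧
      cnt π c s = L.length ∧ ∀ z ∈ Z, cnt π z s = 0 := by
  induction L with
  | nil => exact ⟨1, 0, by simp, by simp, by simp [cnt_zero], fun z _ => cnt_zero z⟩
  | cons b L ih =>
    obtain ⟨u, s, hs, hb, hc, hz⟩ := h b List.mem_cons_self
    obtain ⟨u', s', hs', hb', hc', hz'⟩ := ih (fun x hx => h x (List.mem_cons_of_mem _ hx))
    refine ⟨u * u', s + s', fun p hp => ?_, ?_, ?_, fun z hzz => ?_⟩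
    · rcases Multiset.mem_add.mp hp with hh | hh
      exacts [hs p hh, hs' p hh]
    · rw [List.prod_cons, hb, hb', Multiset.prod_add, Units.val_mul]
      ring
    · rw [cnt_add, hc, hc', List.length_cons]
      omega
    · rw [cnt_add, hz z hzz, hz' z hzz]

omit hπ in
lemma cnt_eq_of_assoc (c : DD)
    (hc : ∀ (v : Rˣ) (q : DD), q * π ↑v = c ↔ q = c)
    (s t : Multiset R) (hs : ∀ p ∈ s, Prime p) (ht : ∀ p ∈ t, Prime p)
    (h : Associated s.prod t.prod) : cnt π c s = cnt π c t := by
  have hrel : Multiset.Rel Associated s t :=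
    UniqueFactorizationMonoid.factors_unique (fun x hx => (hs x hx).irreducible)
      (fun x hx => (ht x hx).irreducible) h
  clear h hs ht
  induction hrel with
  | zero => rfl
  | @cons a b as bs hab _ ih =>
    rw [cnt_cons, cnt_cons, ih]
    congr 1
    obtain ⟨v, hv⟩ := hab
    have hvb : π b = π a * π ↑v := by rw [← hv, map_mul]
    by_cases hac : π a = c
    · rw [if_pos hac, if_pos (by rw [hvb]; exact (hc v (π a)).mpr hac)]
    · rw [if_neg hac, if_neg (by rw [hvb]; intro hh; exact hac ((hc v (π a)).mp hh))]

lemma fact_counts (a : R) (L : List R) (hL : IsTauAtomicFactorization I a L) :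
    ∃ (c : DD) (u : Rˣ) (s : Multiset R), (∀ p ∈ s, Prime p) ∧ a = ↑u * s.prod ∧
      cnt π c s = L.length ∧
      (c = 0 ∨ (c = ε ∧ cnt π 0 s = 0) ∨
        (c = 1 + ε ∧ (∀ v : Rˣ, π ↑v = 1) ∧ cnt π 0 s = 0 ∧ cnt π ε s = 0)) := by
  obtain ⟨⟨hne, ⟨lam, hlam, hprod⟩, hcong⟩, hatoms⟩ := hL
  obtain ⟨b₀, hb₀⟩ := List.exists_mem_of_ne_nil L hne
  have hres : ∀ b ∈ L, π b = π b₀ := fun b hb => (hπ b b₀).mp (hcong b hb b₀ hb₀)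
  have hlamu : a = ↑hlam.unit * L.prod := by rw [IsUnit.unit_spec]; exact hprod
  rcases DD.cases (π b₀) with hβ | hβ | hβ | hβ
  · obtain ⟨u, s, hs, hLp, hcnt, _⟩ := gather (π := π) 0 [] L (fun b hb => by
      obtain ⟨u, s, hs, hbe, h1⟩ := atom_zero hπ b (hatoms b hb) (by rw [hres b hb, hβ])
      exact ⟨u, s, hs, hbe, h1, by simp⟩)
    exact ⟨0, hlam.unit * u, s, hs,
      by rw [hlamu, hLp, Units.val_mul]; ring, hcnt, Or.inl rfl⟩
  · exact absurd hβ (fun hβ => atom_not_one hπ b₀ (hatoms b₀ hb₀) hβ)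
  · obtain ⟨u, s, hs, hLp, hcnt, hz⟩ := gather (π := π) ε [0] L (fun b hb => by
      obtain ⟨u, s, hs, hbe, h1, h2⟩ := atom_eps hπ b (hatoms b hb).1 (by rw [hres b hb, hβ])
      exact ⟨u, s, hs, hbe, h2, by
        intro z hz
        simp only [List.mem_singleton] at hz
        rw [hz]
        exact h1⟩)
    exact ⟨ε, hlam.unit * u, s, hs,
      by rw [hlamu, hLp, Units.val_mul]; ring, hcnt,
      Or.inr (Or.inl ⟨rfl, hz 0 (by simp)⟩)⟩
  · by_cases hU : ∃ v : Rˣ, π ↑v = 1 + ε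
    · obtain ⟨v, hv⟩ := hU
      exact absurd hβ (fun hβ => atom_not_u hπ b₀ (hatoms b₀ hb₀) hβ v hv)
    · have hnU : ∀ v : Rˣ, π ↑v = 1 := by
        intro v
        rcases unit_res (π := π) v with h | h
        · exact h
        · exact absurd ⟨v, h⟩ hU
      obtain ⟨u, s, hs, hLp, hcnt, hz⟩ := gather (π := π) (1 + ε) [0, ε] L (fun b hb => by
        obtain ⟨u, s, hs, hbe, h1, h2, h3⟩ :=
          atom_u hπ b (hatoms b hb) (by rw [hres b hb, hβ]) hnU
        exact ⟨u, s, hs, hbe, h3, by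
          intro z hz
          simp only [List.mem_cons, List.not_mem_nil, or_false] at hz
          rcases hz with rfl | rfl
          exacts [h1, h2]⟩)
      exact ⟨1 + ε, hlam.unit * u, s, hs,
        by rw [hlamu, hLp, Units.val_mul]; ring, hcnt,
        Or.inr (Or.inr ⟨rfl, hnU, hz 0 (by simp), hz ε (by simp)⟩)⟩

lemma lengths_eq (a : R) (L₁ L₂ : List R)
    (h₁ : IsTauAtomicFactorization I a L₁) (h₂ : IsTauAtomicFactorization I a L₂) :
    L₁.length = L₂.length := by
  obtain ⟨c₁, u₁, s₁, hs₁, ha₁, hc₁, hd₁⟩ := fact_counts hπ a L₁ h₁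
  obtain ⟨c₂, u₂, s₂, hs₂, ha₂, hc₂, hd₂⟩ := fact_counts hπ a L₂ h₂
  have key : ↑u₁ * s₁.prod = ↑u₂ * s₂.prod := by rw [← ha₁, ← ha₂]
  have hassoc : Associated s₁.prod s₂.prod := by
    refine ⟨u₂⁻¹ * u₁, ?_⟩
    have : ↑u₂ * (s₁.prod * ↑(u₂⁻¹ * u₁)) = ↑u₂ * s₂.prod := by
      rw [← key, Units.val_mul]
      have : (↑u₂ : R) * ↑u₂⁻¹ = 1 := u₂.mul_inv
      calc ↑u₂ * (s₁.prod * (↑u₂⁻¹ * ↑u₁)) = ↑u₂ * ↑u₂⁻¹ * (↑u₁ * s₁.prod) := by ring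
        _ = ↑u₁ * s₁.prod := by rw [this, one_mul]
    exact mul_left_cancel₀ (Units.ne_zero u₂) this
  have hc0 : ∀ (v : Rˣ) (q : DD), q * π ↑v = 0 ↔ q = 0 := by
    intro v q
    rcases unit_res (π := π) v with h | h <;> rw [h] <;> revert q <;> decide
  have hcε : ∀ (v : Rˣ) (q : DD), q * π ↑v = ε ↔ q = ε := by
    intro v q
    rcases unit_res (π := π) v with h | h <;> rw [h] <;> revert q <;> decide
  have e0 : cnt π 0 s₁ = cnt π 0 s₂ := cnt_eq_of_assoc 0 hc0 s₁ s₂ hs₁ hs₂ hassoc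
  have eε : cnt π ε s₁ = cnt π ε s₂ := cnt_eq_of_assoc ε hcε s₁ s₂ hs₁ hs₂ hassoc
  have hk₁ : 1 ≤ L₁.length := List.length_pos_iff.mpr h₁.1.1
  have hk₂ : 1 ≤ L₂.length := List.length_pos_iff.mpr h₂.1.1
  rcases hd₁ with rfl | ⟨rfl, hz₁⟩ | ⟨rfl, hnU₁, hz₁, hε₁⟩ <;>
    rcases hd₂ with h2 | ⟨h2, hz₂⟩ | ⟨h2, hnU₂, hz₂, hε₂⟩
  · subst h2; omega
  · exfalso; rw [h2] at hc₂; omega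
  · exfalso; rw [h2] at hc₂; omega
  · exfalso; subst h2; omega
  · rw [h2] at hc₂; omega
  · exfalso; omega
  · exfalso; subst h2; omega
  · exfalso; rw [h2] at hc₂; omega
  · rw [h2] at hc₂
    have eu : cnt π (1 + ε) s₁ = cnt π (1 + ε) s₂ :=
      cnt_eq_of_assoc (1 + ε) (fun v q => by rw [hnU₁ v, mul_one]) s₁ s₂ hs₁ hs₂ hassoc
    omega

end Main


end TauAux

/-- UFD `R`, `R/I ≅ ℤ[x]/(2, x²+1)`: every `τ_I`-atomic element has `τ_I`-elasticity `1`. -/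


theorem stmt_11 {R : Type*} [CommRing R] [IsDomain R] [UniqueFactorizationMonoid R]
    (I : Ideal R)
    (f : (R ⧸ I) ≃+* (ℤ[X] ⧸ Ideal.span ({2, X ^ 2 + 1} : Set ℤ[X])))
    (a : R) (ha : IsTauAtomic I a) :
    tauElasticity I a = 1 ∧
    ∀ L₁ L₂ : List R, IsTauAtomicFactorization I a L₁ →
      IsTauAtomicFactorization I a L₂ → L₁.length = L₂.length := by
  classical
  obtain ⟨π, hπ⟩ : ∃ π : R →+* DD, ∀ b c : R,
      Ideal.Quotient.mk I b = Ideal.Quotient.mk I c ↔ π b = π c := by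
    refine ⟨psi.comp ((f : (R ⧸ I) →+* _).comp (Ideal.Quotient.mk I)),
      fun b c => ⟨fun h => by simp [RingHom.comp_apply, h], fun h => ?_⟩⟩
    have h2 := psi_inj (by simpa [RingHom.comp_apply] using h)
    have h3 := f.injective h2
    exact h3
  have hlen : ∀ L₁ L₂ : List R, IsTauAtomicFactorization I a L₁ →
      IsTauAtomicFactorization I a L₂ → L₁.length = L₂.length :=
    fun L₁ L₂ h₁ h₂ => lengths_eq hπ a L₁ L₂ h₁ h₂
  refine ⟨?_, hlen⟩
  obtain ⟨L₀, hL₀⟩ := ha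
  have hpos : L₀.length ≠ 0 := by
    have := List.length_pos_iff.mpr hL₀.1.1
    omega
  simp only [tauElasticity]
  apply le_antisymm
  · apply sSup_le
    rintro r ⟨L₁, L₂, hf1, hf2, rfl⟩
    rw [hlen L₁ L₂ hf1 hf2]
    exact ENNReal.div_self_le_one
  · apply le_sSup
    refine ⟨L₀, L₀, hL₀, hL₀, ?_⟩
    rw [ENNReal.div_self (by exact_mod_cast hpos) (by simp)]
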